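/- For every n ≥ 1, the linear span (over ℝ) of the set of n×n doubly stochastic matrices equals the subspace of n×n real matrices M for which all row sums of M and all column sums of M are equal to one common value; consequently this span has dimension (n − 1)² + 1. -/

import Mathlib

open Matrix Finset

namespace SpanDS

variable (m : ℕ)

/-- The submodule of matrices with all row and column sums equal to a common value. -/
def V (n : ℕ) : Submodule ℝ (Matrix (Fin n) (Fin n) ℝ) where
  carrier := {M | ∃ c : ℝ, (∀ i, ∑ j, M i j = c) ∧ (∀ j, ∑ i, M i j = c)}
  add_mem' := by
    rintro M N ⟨c, hc1, hc2⟩ ⟨d, hd1, hd2⟩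
    exact ⟨c + d, fun i => by simp [Finset.sum_add_distrib, hc1, hd1],
      fun j => by simp [Finset.sum_add_distrib, hc2, hd2]⟩
  zero_mem' := ⟨0, by simp, by simp⟩
  smul_mem' := by
    rintro a M ⟨c, hc1, hc2⟩
    exact ⟨a * c, fun i => by simp [← Finset.mul_sum, hc1],
      fun j => by simp [← Finset.mul_sum, hc2]⟩

noncomputable def L : (Matrix (Fin m) (Fin m) ℝ × ℝ) →ₗ[ℝ] Matrix (Fin (m+1)) (Fin (m+1)) ℝ where
  toFun p := Matrix.of fun i j =>
    if hi : (i : ℕ) < m then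
      if hj : (j : ℕ) < m then p.1 ⟨i, hi⟩ ⟨j, hj⟩
      else p.2 - ∑ j', p.1 ⟨i, hi⟩ j'
    else
      if hj : (j : ℕ) < m then p.2 - ∑ i', p.1 i' ⟨j, hj⟩
      else (∑ i', ∑ j', p.1 i' j') - ((m : ℝ) - 1) * p.2
  map_add' p q := by
    funext i j
    simp only [Matrix.add_apply, Matrix.of_apply, Prod.fst_add, Prod.snd_add]
    split_ifs
    · rfl
    · simp only [Finset.sum_add_distrib]; ring
    · simp only [Finset.sum_add_distrib]; ring
    · simp only [Finset.sum_add_distrib]; ring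
  map_smul' a p := by
    funext i j
    simp only [Matrix.smul_apply, Matrix.of_apply, Prod.smul_fst, Prod.smul_snd, smul_eq_mul, RingHom.id_apply]
    split_ifs
    · rfl
    · simp only [mul_sub, Finset.mul_sum]
    · simp only [mul_sub, Finset.mul_sum]
    · simp only [mul_sub, Finset.mul_sum]; ring

lemma L_cc (p) (i j : Fin m) : L m p i.castSucc j.castSucc = p.1 i j := by
  exact (dif_pos i.isLt).trans (dif_pos j.isLt)

lemma L_cl (p) (i : Fin m) : L m p i.castSucc (Fin.last m) = p.2 - ∑ j', p.1 i j' := by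
  exact (dif_pos i.isLt).trans (dif_neg (by simp))

lemma L_lc (p) (j : Fin m) : L m p (Fin.last m) j.castSucc = p.2 - ∑ i', p.1 i' j := by
  exact (dif_neg (by simp)).trans (dif_pos j.isLt)

lemma L_ll (p) : L m p (Fin.last m) (Fin.last m)
    = (∑ i', ∑ j', p.1 i' j') - ((m : ℝ) - 1) * p.2 := by
  exact (dif_neg (by simp)).trans (dif_neg (by simp))

lemma L_rowsum (p) (i : Fin (m+1)) : ∑ j, L m p i j = p.2 := by
  induction i using Fin.lastCases with
  | last =>
    rw [Fin.sum_univ_castSucc]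
    simp only [L_lc, L_ll]
    rw [Finset.sum_sub_distrib]
    have hcomm : (∑ j : Fin m, ∑ i' : Fin m, p.1 i' j) = ∑ i' : Fin m, ∑ j : Fin m, p.1 i' j :=
      Finset.sum_comm
    rw [hcomm]
    simp [Finset.sum_const, card_univ, nsmul_eq_mul]
    ring
  | cast i =>
    rw [Fin.sum_univ_castSucc]
    simp only [L_cc, L_cl]
    ring
lemma L_colsum (p) (j : Fin (m+1)) : ∑ i, L m p i j = p.2 := by
  induction j using Fin.lastCases with
  | last =>
    rw [Fin.sum_univ_castSucc]
    simp only [L_cl, L_ll]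
    rw [Finset.sum_sub_distrib]
    simp [Finset.sum_const, card_univ, nsmul_eq_mul]
    ring
  | cast j =>
    rw [Fin.sum_univ_castSucc]
    simp only [L_cc, L_lc]
    ring

lemma L_injective : Function.Injective (L m) := by
  intro p q h
  have h2 : p.2 = q.2 := by
    have := congrArg (fun M => ∑ j, M (Fin.last m) j) h
    simpa [L_rowsum] using this
  have h1 : p.1 = q.1 := by
    funext i j
    have := congrFun (congrFun h i.castSucc) j.castSucc
    simpa [L_cc] using this
  exact Prod.ext h1 h2

lemma L_range : LinearMap.range (L m) = V (m+1) := by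
  apply le_antisymm
  · rintro M ⟨p, rfl⟩
    exact ⟨p.2, L_rowsum m p, L_colsum m p⟩
  · rintro M ⟨c, hr, hc⟩
    refine ⟨(Matrix.of fun i j => M i.castSucc j.castSucc, c), ?_⟩
    have h1 : ∀ i : Fin m, ∑ j : Fin m, M i.castSucc j.castSucc
        = c - M i.castSucc (Fin.last m) := fun i => by
      have := hr i.castSucc; rw [Fin.sum_univ_castSucc] at this; linarith
    have h1' : ∀ j : Fin m, ∑ i : Fin m, M i.castSucc j.castSucc
        = c - M (Fin.last m) j.castSucc := fun j => by
      have := hc j.castSucc; rw [Fin.sum_univ_castSucc] at this; linarith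
    have h2 : ∑ i : Fin m, M i.castSucc (Fin.last m) = c - M (Fin.last m) (Fin.last m) := by
      have := hc (Fin.last m); rw [Fin.sum_univ_castSucc] at this; linarith
    funext i j
    induction i using Fin.lastCases with
    | last =>
      induction j using Fin.lastCases with
      | last =>
        rw [L_ll]
        simp only [Matrix.of_apply]
        rw [Finset.sum_congr rfl fun i _ => h1 i, Finset.sum_sub_distrib]
        rw [h2]
        simp [Finset.sum_const, card_univ, nsmul_eq_mul]
        ring
      | cast j =>
        rw [L_lc]
        simp only [Matrix.of_apply]
        rw [h1' j]
        ring
    | cast i =>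
      induction j using Fin.lastCases with
      | last =>
        rw [L_cl]
        simp only [Matrix.of_apply]
        rw [h1 i]
        ring
      | cast j =>
        rw [L_cc]
        rfl

lemma finrank_V : Module.finrank ℝ (V (m+1)) = m ^ 2 + 1 := by
  rw [← L_range, LinearMap.finrank_range_of_inj (L_injective m)]
  simp [Module.finrank_prod, Module.finrank_matrix, sq]

lemma span_eq :
    Submodule.span ℝ {P : Matrix (Fin (m+1)) (Fin (m+1)) ℝ |
        (∀ i j, 0 ≤ P i j) ∧ (∀ i, ∑ j, P i j = 1) ∧ (∀ j, ∑ i, P i j = 1)} = V (m+1) := by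
  apply le_antisymm
  · rw [Submodule.span_le]
    rintro P ⟨h0, h1, h2⟩
    exact ⟨1, h1, h2⟩
  · rintro M ⟨c, hr, hc⟩
    have hn1 : (1 : ℝ) ≤ ((m+1 : ℕ) : ℝ) := by push_cast; linarith [Nat.cast_nonneg (α := ℝ) m]
    have hn0 : ((m+1 : ℕ) : ℝ) ≠ 0 := by positivity
    set S : ℝ := ∑ i, ∑ j, |M i j| with hSdef
    have hS : 0 ≤ S := Finset.sum_nonneg fun _ _ => Finset.sum_nonneg fun _ _ => abs_nonneg _
    set t : ℝ := ((m+1 : ℕ) : ℝ) * (S + |c| + 1) with htdef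
    have htS : S + |c| + 1 ≤ t := by
      nlinarith [abs_nonneg c]
    have ht : 0 < c + t := by
      nlinarith [abs_nonneg c, neg_abs_le c]
    have htn : t * ((m+1 : ℕ) : ℝ)⁻¹ = S + |c| + 1 := by
      rw [htdef, mul_comm, ← mul_assoc, inv_mul_cancel₀ hn0, one_mul]
    set J : Matrix (Fin (m+1)) (Fin (m+1)) ℝ := Matrix.of fun _ _ => ((m+1 : ℕ) : ℝ)⁻¹ with hJdef
    have hJsum : ∀ f : Fin (m+1) → ℝ, (∀ x, f x = ((m+1 : ℕ) : ℝ)⁻¹) → ∑ x, f x = 1 := by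
      intro f hf
      simp only [hf]
      rw [Finset.sum_const, card_univ, Fintype.card_fin, nsmul_eq_mul, mul_inv_cancel₀ hn0]
    have hJmem : J ∈ {P : Matrix (Fin (m+1)) (Fin (m+1)) ℝ |
        (∀ i j, 0 ≤ P i j) ∧ (∀ i, ∑ j, P i j = 1) ∧ (∀ j, ∑ i, P i j = 1)} := by
      refine ⟨fun i j => by simp only [hJdef, Matrix.of_apply]; positivity,
        fun i => hJsum _ fun _ => rfl,
        fun j => hJsum _ fun _ => rfl⟩
    set D : Matrix (Fin (m+1)) (Fin (m+1)) ℝ := (c + t)⁻¹ • (M + t • J) with hDdef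
    have hDentry : ∀ i j, D i j = (c + t)⁻¹ * (M i j + t * ((m+1 : ℕ) : ℝ)⁻¹) := by
      intro i j
      simp [hDdef, hJdef, Matrix.smul_apply, Matrix.add_apply]
      ring
    have hDsumrow : ∀ i, ∑ j, D i j = 1 := by
      intro i
      simp only [hDentry]
      rw [← Finset.mul_sum, Finset.sum_add_distrib, hr i, Finset.sum_const, card_univ,
        Fintype.card_fin, nsmul_eq_mul, htn]
      have : c + ((m+1 : ℕ) : ℝ) * (S + |c| + 1) = c + t := by rw [htdef]
      rw [this, inv_mul_cancel₀ ht.ne']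
    have hDsumcol : ∀ j, ∑ i, D i j = 1 := by
      intro j
      simp only [hDentry]
      rw [← Finset.mul_sum, Finset.sum_add_distrib, hc j, Finset.sum_const, card_univ,
        Fintype.card_fin, nsmul_eq_mul, htn]
      have : c + ((m+1 : ℕ) : ℝ) * (S + |c| + 1) = c + t := by rw [htdef]
      rw [this, inv_mul_cancel₀ ht.ne']
    have hDmem : D ∈ {P : Matrix (Fin (m+1)) (Fin (m+1)) ℝ |
        (∀ i j, 0 ≤ P i j) ∧ (∀ i, ∑ j, P i j = 1) ∧ (∀ j, ∑ i, P i j = 1)} := by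
      refine ⟨fun i j => ?_, hDsumrow, hDsumcol⟩
      rw [hDentry, htn]
      have h1 : |M i j| ≤ ∑ j', |M i j'| :=
        Finset.single_le_sum (f := fun j' => |M i j'|) (fun k _ => abs_nonneg _)
          (Finset.mem_univ j)
      have h2 : (∑ j', |M i j'|) ≤ S :=
        Finset.single_le_sum (f := fun i' => ∑ j', |M i' j'|)
          (fun k _ => Finset.sum_nonneg fun _ _ => abs_nonneg _) (Finset.mem_univ i)
      have := neg_abs_le (M i j)
      have habs : 0 ≤ M i j + (S + |c| + 1) := by nlinarith [abs_nonneg c]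
      positivity
    have hMeq : M = (c + t) • D - t • J := by
      funext i j
      simp only [Matrix.sub_apply, Matrix.smul_apply, smul_eq_mul, hDentry, hJdef,
        Matrix.of_apply]
      rw [← mul_assoc, mul_inv_cancel₀ ht.ne', one_mul]
      ring
    rw [hMeq]
    exact Submodule.sub_mem _
      (Submodule.smul_mem _ _ (Submodule.subset_span hDmem))
      (Submodule.smul_mem _ _ (Submodule.subset_span hJmem))

end SpanDS

/-- The linear span of the `n × n` doubly stochastic matrices is the subspace of
matrices all of whose row sums and column sums are equal to one common value;
consequently this span has dimension `(n-1)² + 1`. -/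
theorem span_doublyStochastic (n : ℕ) (hn : 1 ≤ n) :
    (Submodule.span ℝ {P : Matrix (Fin n) (Fin n) ℝ |
        (∀ i j, 0 ≤ P i j) ∧ (∀ i, ∑ j, P i j = 1) ∧ (∀ j, ∑ i, P i j = 1)} :
      Set (Matrix (Fin n) (Fin n) ℝ)) =
      {M : Matrix (Fin n) (Fin n) ℝ |
        ∃ c : ℝ, (∀ i, ∑ j, M i j = c) ∧ (∀ j, ∑ i, M i j = c)} ∧
    Module.finrank ℝ (Submodule.span ℝ {P : Matrix (Fin n) (Fin n) ℝ |
        (∀ i j, 0 ≤ P i j) ∧ (∀ i, ∑ j, P i j = 1) ∧ (∀ j, ∑ i, P i j = 1)}) =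
      (n - 1) ^ 2 + 1 := by
  obtain ⟨m, rfl⟩ : ∃ m, n = m + 1 := ⟨n - 1, by omega⟩
  constructor
  · rw [SpanDS.span_eq]
    rfl
  · rw [SpanDS.span_eq, SpanDS.finrank_V]
    simp
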